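/- The quantity z_k = ∑_{l=2}^∞ l(l+1)·c(l,k) satisfies z_k = O(1/k); precisely, there is a constant C > 0 such that 0 ≤ z_k ≤ C/k for all integers k ≥ 1. -/

import Mathlib

open scoped Classical

/-- The constants `c(l,k)`: `c(l,0) = c(0,k) = 0`,
`c(1,k) = (2k²+14k)/((k+1)(k+2)(k+3)(k+4))` for `k ≥ 1`, and for `l > 1`, `k > 0`,
`c(l,k) = c(l,k-1)·(l+k-1)/(2l+k+2) + c(l-1,k)·(l-1)/(2l+k+2)`. -/
noncomputable def c : ℕ → ℕ → ℝ
  | _, 0 => 0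
  | 0, _ => 0
  | 1, k + 1 =>
      (2 * ((k : ℝ) + 1) ^ 2 + 14 * ((k : ℝ) + 1)) /
        (((k : ℝ) + 2) * ((k : ℝ) + 3) * ((k : ℝ) + 4) * ((k : ℝ) + 5))
  | l + 2, k + 1 =>
      c (l + 2) k * ((l : ℝ) + (k : ℝ) + 2) / (2 * (l : ℝ) + (k : ℝ) + 7) +
      c (l + 1) (k + 1) * ((l : ℝ) + 1) / (2 * (l : ℝ) + (k : ℝ) + 7)
termination_by l k => (l, k)

/-! ### Basic equation lemmas for `c` -/

lemma c_l_zero (l : ℕ) : c l 0 = 0 := by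
  cases l with
  | zero => simp [c]
  | succ n => cases n <;> simp [c]

lemma c_one_succ (k : ℕ) : c 1 (k+1) =
    (2 * ((k : ℝ) + 1) ^ 2 + 14 * ((k : ℝ) + 1)) /
        (((k : ℝ) + 2) * ((k : ℝ) + 3) * ((k : ℝ) + 4) * ((k : ℝ) + 5)) := by
  simp [c]

lemma c_rec (l k : ℕ) : c (l+2) (k+1) =
    c (l + 2) k * ((l : ℝ) + (k : ℝ) + 2) / (2 * (l : ℝ) + (k : ℝ) + 7) +
      c (l + 1) (k + 1) * ((l : ℝ) + 1) / (2 * (l : ℝ) + (k : ℝ) + 7) := by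
  rw [c]

/-! ### Nonnegativity and a geometric bound -/

lemma c_nonneg : ∀ l k, 0 ≤ c l k := by
  intro l
  induction l with
  | zero => intro k; cases k <;> simp [c]
  | succ n ih =>
    cases n with
    | zero =>
      intro k
      cases k with
      | zero => simp [c_l_zero]
      | succ k =>
        rw [c_one_succ]
        positivity
    | succ m =>
      intro k
      induction k with
      | zero => simp [c_l_zero]
      | succ k ihk =>
        rw [c_rec]
        have h1 := ih (k+1)
        have h2 : (0:ℝ) < 2 * (m : ℝ) + (k : ℝ) + 7 := by positivity
        have h3 : (0:ℝ) ≤ (m : ℝ) + (k : ℝ) + 2 := by positivity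
        have h4 : (0:ℝ) ≤ (m : ℝ) + 1 := by positivity
        positivity

lemma c_le_geom : ∀ l k, c l k ≤ (2/3 : ℝ)^l * 2^k := by
  intro l
  induction l with
  | zero => intro k; cases k <;> simp [c] <;> positivity
  | succ n ih =>
    cases n with
    | zero =>
      intro k
      cases k with
      | zero => rw [c_l_zero]; positivity
      | succ k =>
        rw [c_one_succ]
        have hk : (0:ℝ) ≤ (k:ℝ) := Nat.cast_nonneg k
        have h2 : ((2:ℝ)/3)^1 * 2^(k+1) ≥ 4/3 := by
          have : (2:ℝ)^(k+1) ≥ 2^1 := by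
            apply pow_le_pow_right₀ (by norm_num)
            omega
          norm_num at this ⊢
          nlinarith
        have h1 : (2 * ((k : ℝ) + 1) ^ 2 + 14 * ((k : ℝ) + 1)) /
            (((k : ℝ) + 2) * ((k : ℝ) + 3) * ((k : ℝ) + 4) * ((k : ℝ) + 5)) ≤ 4/3 := by
          rw [div_le_iff₀ (by positivity)]
          nlinarith
        linarith
    | succ m =>
      intro k
      induction k with
      | zero => rw [c_l_zero]; positivity
      | succ k ihk =>
        rw [c_rec]
        have h2 : (0:ℝ) < 2 * (m : ℝ) + (k : ℝ) + 7 := by positivity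
        have hc1 : c (m+2) k ≤ (2/3:ℝ)^(m+2) * 2^k := ihk
        have hc2 : c (m+1) (k+1) ≤ (2/3:ℝ)^(m+1) * 2^(k+1) := ih (k+1)
        have hn1 := c_nonneg (m+2) k
        have hn2 := c_nonneg (m+1) (k+1)
        have key : ((2/3:ℝ)^(m+2) * 2^k) * ((m : ℝ) + (k : ℝ) + 2) / (2 * (m : ℝ) + (k : ℝ) + 7)
            + ((2/3:ℝ)^(m+1) * 2^(k+1)) * ((m : ℝ) + 1) / (2 * (m : ℝ) + (k : ℝ) + 7)
            ≤ (2/3:ℝ)^(m+2) * 2^(k+1) := by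
          have e1 : (2/3:ℝ)^(m+1) = (2/3:ℝ)^(m+2) * (3/2) := by
            rw [pow_succ]; ring
          have e2 : (2:ℝ)^(k+1) = 2^k * 2 := by rw [pow_succ]
          rw [e1, e2]
          set A := (2/3:ℝ)^(m+2) * 2^k with hA
          have hA0 : 0 < A := by positivity
          rw [← add_div, div_le_iff₀ h2]
          have hx : (0:ℝ) ≤ (m:ℝ) := Nat.cast_nonneg m
          have hy : (0:ℝ) ≤ (k:ℝ) := Nat.cast_nonneg k
          nlinarith [mul_nonneg hx hy, hA0.le]
        calc c (m + 2) k * ((m : ℝ) + (k : ℝ) + 2) / (2 * (m : ℝ) + (k : ℝ) + 7) +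
              c (m + 1) (k + 1) * ((m : ℝ) + 1) / (2 * (m : ℝ) + (k : ℝ) + 7)
            ≤ ((2/3:ℝ)^(m+2) * 2^k) * ((m : ℝ) + (k : ℝ) + 2) / (2 * (m : ℝ) + (k : ℝ) + 7)
              + ((2/3:ℝ)^(m+1) * 2^(k+1)) * ((m : ℝ) + 1) / (2 * (m : ℝ) + (k : ℝ) + 7) := by
              have hX : (0:ℝ) ≤ (m : ℝ) + (k : ℝ) + 2 := by positivity
              have hY : (0:ℝ) ≤ (m : ℝ) + 1 := by positivity
              gcongr
          _ ≤ (2/3:ℝ)^(m+2) * 2^(k+1) := key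

lemma c_le_geom' (a m k : ℕ) (h : a ≤ m) : c m k ≤ (2/3:ℝ)^a * 2^k := by
  refine le_trans (c_le_geom m k) ?_
  have h1 : (2/3:ℝ)^m ≤ (2/3:ℝ)^a :=
    pow_le_pow_of_le_one (by norm_num) (by norm_num) h
  have h2 : (0:ℝ) ≤ 2^k := by positivity
  exact mul_le_mul_of_nonneg_right h1 h2

/-! ### The weight `W` and the combination `Gg` -/

noncomputable def W (l k : ℕ) : ℝ :=
  ((l:ℝ)^2+(l:ℝ)+2)*((l:ℝ)+(k:ℝ)+1)^2/((k:ℝ)+1)^2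

noncomputable def Gg (l k : ℕ) : ℝ :=
  W l k - W (l+1) k * (l:ℝ)/(2*(l:ℝ)+(k:ℝ)+4)

lemma W_nonneg (l k : ℕ) : 0 ≤ W l k := by
  unfold W; positivity

lemma Gg_le_W (l k : ℕ) : Gg l k ≤ W l k := by
  have h : 0 ≤ W (l+1) k * (l:ℝ)/(2*(l:ℝ)+(k:ℝ)+4) := by
    have := W_nonneg (l+1) k
    positivity
  unfold Gg; linarith

lemma W_le (n k : ℕ) : W (n+2) k ≤ 14*((k:ℝ)+4)^2*((n:ℝ)+1)^4 := by
  unfold W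
  set x : ℝ := (n:ℝ) with hxdef
  set y : ℝ := (k:ℝ) with hydef
  have hx : (0:ℝ) ≤ x := Nat.cast_nonneg n
  have hy : (0:ℝ) ≤ y := Nat.cast_nonneg k
  push_cast
  have h1 : ((x+2)^2+(x+2)+2)*((x+2)+y+1)^2/(y+1)^2 ≤ ((x+2)^2+(x+2)+2)*((x+2)+y+1)^2 := by
    apply div_le_self (by positivity)
    nlinarith
  refine h1.trans ?_
  have e2 : ((x+2)+y+1)^2 ≤ ((y+4)*(x+1))^2 := by
    have h3 : (x+2)+y+1 ≤ (y+4)*(x+1) := by nlinarith [mul_nonneg hx hy]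
    have h4 : (0:ℝ) ≤ (x+2)+y+1 := by positivity
    nlinarith
  have e1 : ((x+2)^2+(x+2)+2) ≤ 14*(x+1)^2 := by nlinarith
  have h5 : ((x+2)^2+(x+2)+2)*((x+2)+y+1)^2 ≤ (14*(x+1)^2)*(((y+4)*(x+1))^2) := by
    apply mul_le_mul e1 e2 (by positivity) (by positivity)
  nlinarith [h5]

lemma W_le' (n k : ℕ) : W (n+3) k ≤ 14*((k:ℝ)+4)^2*((n:ℝ)+1)^4 := by
  unfold W
  set x : ℝ := (n:ℝ) with hxdef
  set y : ℝ := (k:ℝ) with hydef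
  have hx : (0:ℝ) ≤ x := Nat.cast_nonneg n
  have hy : (0:ℝ) ≤ y := Nat.cast_nonneg k
  push_cast
  have h1 : ((x+3)^2+(x+3)+2)*((x+3)+y+1)^2/(y+1)^2 ≤ ((x+3)^2+(x+3)+2)*((x+3)+y+1)^2 := by
    apply div_le_self (by positivity)
    nlinarith
  refine h1.trans ?_
  have e2 : ((x+3)+y+1)^2 ≤ ((y+4)*(x+1))^2 := by
    have h3 : (x+3)+y+1 ≤ (y+4)*(x+1) := by nlinarith [mul_nonneg hx hy]
    have h4 : (0:ℝ) ≤ (x+3)+y+1 := by positivity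
    nlinarith
  have e1 : ((x+3)^2+(x+3)+2) ≤ 14*(x+1)^2 := by nlinarith
  have h5 : ((x+3)^2+(x+3)+2)*((x+3)+y+1)^2 ≤ (14*(x+1)^2)*(((y+4)*(x+1))^2) := by
    apply mul_le_mul e1 e2 (by positivity) (by positivity)
  nlinarith [h5]

/-! ### Summability helpers -/

set_option maxHeartbeats 1000000 in
lemma summable_aux : Summable (fun n : ℕ => ((n:ℝ)+1)^4 * (2/3)^n) := by
  have hr : ‖(2/3 : ℝ)‖ < 1 := by
    rw [Real.norm_eq_abs, abs_of_nonneg (by norm_num : (0:ℝ) ≤ (2:ℝ)/3)]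
    norm_num
  have h1 : Summable (fun n : ℕ => (n:ℝ)^4 * (2/3)^n) :=
    summable_pow_mul_geometric_of_norm_lt_one 4 hr
  have h2 : Summable (fun n : ℕ => ((2:ℝ)/3)^n) :=
    summable_geometric_of_lt_one (by norm_num) (by norm_num)
  refine Summable.of_nonneg_of_le (fun n => by positivity) (fun n => ?_)
    ((h1.mul_left 8).add (h2.mul_left 8))
  have hn : (0:ℝ) ≤ (n:ℝ) := Nat.cast_nonneg n
  have hp : (0:ℝ) ≤ ((2:ℝ)/3)^n := by positivity
  have hq : ((n:ℝ)+1)^4 ≤ 8*(n:ℝ)^4 + 8 := by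
    nlinarith [sq_nonneg ((n:ℝ)-1), sq_nonneg ((n:ℝ)^2-1), sq_nonneg ((n:ℝ)^2-(n:ℝ)), sq_nonneg (n:ℝ)]
  nlinarith [mul_le_mul_of_nonneg_right hq hp]

lemma sum_helper (k : ℕ) {f : ℕ → ℝ}
    (h : ∀ n, ‖f n‖ ≤ 14*((k:ℝ)+4)^2*2^k * (((n:ℝ)+1)^4 * (2/3)^n)) : Summable f :=
  Summable.of_norm_bounded (summable_aux.mul_left (14*((k:ℝ)+4)^2*2^k)) h

lemma bound2 {aa cc A Cv : ℝ} (ha : 0 ≤ aa) (hA : aa ≤ A) (hc : 0 ≤ cc) (hC : cc ≤ Cv) :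
    ‖aa * cc‖ ≤ A * Cv := by
  rw [Real.norm_eq_abs, abs_of_nonneg (mul_nonneg ha hc)]
  exact mul_le_mul hA hC hc (le_trans ha hA)

lemma bound3 {aa bb cc A Cv : ℝ} (ha : 0 ≤ aa) (hA : aa ≤ A) (hb0 : 0 ≤ bb) (hb1 : bb ≤ 1)
    (hc : 0 ≤ cc) (hC : cc ≤ Cv) : ‖aa * bb * cc‖ ≤ A * Cv := by
  rw [Real.norm_eq_abs, abs_of_nonneg (mul_nonneg (mul_nonneg ha hb0) hc)]
  have h1 : aa * bb * cc ≤ aa * cc := by nlinarith [mul_nonneg (mul_nonneg ha hc) (sub_nonneg.mpr hb1)]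
  exact h1.trans (mul_le_mul hA hC hc (le_trans ha hA))

/-! ### The two key pointwise inequalities -/

lemma mono_nonneg {x y : ℝ} (hx : 0 ≤ x) (hy : 0 ≤ y) (co : ℝ) (hc : 0 ≤ co) (i j : ℕ) :
    0 ≤ co * x^i * y^j := mul_nonneg (mul_nonneg hc (pow_nonneg hx i)) (pow_nonneg hy j)

lemma GI (n j : ℕ) : ((n:ℝ)+2)*((n:ℝ)+3) ≤ Gg (n+2) (j+1) := by
  set x : ℝ := (n:ℝ) with hxdef
  set y : ℝ := (j:ℝ) with hydef
  have hx : (0:ℝ) ≤ x := Nat.cast_nonneg n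
  have hy : (0:ℝ) ≤ y := Nat.cast_nonneg j
  have hd1 : (y+2) ≠ 0 := by positivity
  have hd2 : (2*x+y+9) ≠ 0 := by positivity
  have key : (Gg (n+2) (j+1) - (x+2)*(x+3)) * ((y+2)^2*(2*x+y+9)) =
      236 * x ^ 0 * y ^ 0 + 184 * x ^ 0 * y ^ 1 + 30 * x ^ 0 * y ^ 2 + 2 * x ^ 0 * y ^ 3 +
      344 * x ^ 1 * y ^ 0 + 192 * x ^ 1 * y ^ 1 + 12 * x ^ 1 * y ^ 2 +
      255 * x ^ 2 * y ^ 0 + 112 * x ^ 2 * y ^ 1 + 5 * x ^ 2 * y ^ 2 +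
      94 * x ^ 3 * y ^ 0 + 31 * x ^ 3 * y ^ 1 + 1 * x ^ 3 * y ^ 2 +
      16 * x ^ 4 * y ^ 0 + 3 * x ^ 4 * y ^ 1 + 1 * x ^ 5 * y ^ 0 := by
    simp only [Gg, W]
    push_cast
    rw [← hxdef, ← hydef]
    field_simp
    ring
  have hP : (0:ℝ) ≤ 236 * x ^ 0 * y ^ 0 + 184 * x ^ 0 * y ^ 1 + 30 * x ^ 0 * y ^ 2 + 2 * x ^ 0 * y ^ 3 +
      344 * x ^ 1 * y ^ 0 + 192 * x ^ 1 * y ^ 1 + 12 * x ^ 1 * y ^ 2 +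
      255 * x ^ 2 * y ^ 0 + 112 * x ^ 2 * y ^ 1 + 5 * x ^ 2 * y ^ 2 +
      94 * x ^ 3 * y ^ 0 + 31 * x ^ 3 * y ^ 1 + 1 * x ^ 3 * y ^ 2 +
      16 * x ^ 4 * y ^ 0 + 3 * x ^ 4 * y ^ 1 + 1 * x ^ 5 * y ^ 0 := by
    repeat' apply add_nonneg
    all_goals exact mono_nonneg hx hy _ (by norm_num) _ _
  have hMt : (0:ℝ) < (y+2)^2*(2*x+y+9) := by positivity
  nlinarith [key, hP, hMt]

set_option maxHeartbeats 2000000 in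
lemma KI (n j : ℕ) : W (n+2) (j+2) * (((n:ℝ)+(j:ℝ)+3)/(2*(n:ℝ)+(j:ℝ)+8)) ≤
    (((j:ℝ)+4)/((j:ℝ)+5)) * Gg (n+2) (j+1) := by
  set x : ℝ := (n:ℝ) with hxdef
  set y : ℝ := (j:ℝ) with hydef
  have hx : (0:ℝ) ≤ x := Nat.cast_nonneg n
  have hy : (0:ℝ) ≤ y := Nat.cast_nonneg j
  have hd1 : (y+2) ≠ 0 := by positivity
  have hd2 : (y+3) ≠ 0 := by positivity
  have hd3 : (y+5) ≠ 0 := by positivity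
  have hd4 : (2*x+y+8) ≠ 0 := by positivity
  have hd5 : (2*x+y+9) ≠ 0 := by positivity
  have key : ((((j:ℝ)+4)/((j:ℝ)+5)) * Gg (n+2) (j+1)
        - W (n+2) (j+2) * (((n:ℝ)+(j:ℝ)+3)/(2*(n:ℝ)+(j:ℝ)+8)))
      * ((y+2)^2*(y+3)^2*(y+5)*(2*x+y+8)*(2*x+y+9)) =
      22176 * x ^ 0 * y ^ 0 +
      36912 * x ^ 0 * y ^ 1 +
      23820 * x ^ 0 * y ^ 2 +
      7768 * x ^ 0 * y ^ 3 +
      1360 * x ^ 0 * y ^ 4 +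
      120 * x ^ 0 * y ^ 5 +
      4 * x ^ 0 * y ^ 6 +
      26580 * x ^ 1 * y ^ 0 +
      33000 * x ^ 1 * y ^ 1 +
      15405 * x ^ 1 * y ^ 2 +
      3523 * x ^ 1 * y ^ 3 +
      415 * x ^ 1 * y ^ 4 +
      21 * x ^ 1 * y ^ 5 +
      22192 * x ^ 2 * y ^ 0 +
      20824 * x ^ 2 * y ^ 1 +
      6507 * x ^ 2 * y ^ 2 +
      819 * x ^ 2 * y ^ 3 +
      41 * x ^ 2 * y ^ 4 +
      1 * x ^ 2 * y ^ 5 +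
      12008 * x ^ 3 * y ^ 0 +
      9762 * x ^ 3 * y ^ 1 +
      2418 * x ^ 3 * y ^ 2 +
      194 * x ^ 3 * y ^ 3 +
      2 * x ^ 3 * y ^ 4 +
      3592 * x ^ 4 * y ^ 0 +
      2632 * x ^ 4 * y ^ 1 +
      548 * x ^ 4 * y ^ 2 +
      32 * x ^ 4 * y ^ 3 +
      540 * x ^ 5 * y ^ 0 +
      352 * x ^ 5 * y ^ 1 +
      58 * x ^ 5 * y ^ 2 +
      2 * x ^ 5 * y ^ 3 +
      32 * x ^ 6 * y ^ 0 +
      18 * x ^ 6 * y ^ 1 +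
      2 * x ^ 6 * y ^ 2 := by
    simp only [Gg, W]
    push_cast
    rw [← hxdef, ← hydef]
    field_simp
    ring
  have hP : (0:ℝ) ≤ 22176 * x ^ 0 * y ^ 0 +
      36912 * x ^ 0 * y ^ 1 +
      23820 * x ^ 0 * y ^ 2 +
      7768 * x ^ 0 * y ^ 3 +
      1360 * x ^ 0 * y ^ 4 +
      120 * x ^ 0 * y ^ 5 +
      4 * x ^ 0 * y ^ 6 +
      26580 * x ^ 1 * y ^ 0 +
      33000 * x ^ 1 * y ^ 1 +
      15405 * x ^ 1 * y ^ 2 +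
      3523 * x ^ 1 * y ^ 3 +
      415 * x ^ 1 * y ^ 4 +
      21 * x ^ 1 * y ^ 5 +
      22192 * x ^ 2 * y ^ 0 +
      20824 * x ^ 2 * y ^ 1 +
      6507 * x ^ 2 * y ^ 2 +
      819 * x ^ 2 * y ^ 3 +
      41 * x ^ 2 * y ^ 4 +
      1 * x ^ 2 * y ^ 5 +
      12008 * x ^ 3 * y ^ 0 +
      9762 * x ^ 3 * y ^ 1 +
      2418 * x ^ 3 * y ^ 2 +
      194 * x ^ 3 * y ^ 3 +
      2 * x ^ 3 * y ^ 4 +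
      3592 * x ^ 4 * y ^ 0 +
      2632 * x ^ 4 * y ^ 1 +
      548 * x ^ 4 * y ^ 2 +
      32 * x ^ 4 * y ^ 3 +
      540 * x ^ 5 * y ^ 0 +
      352 * x ^ 5 * y ^ 1 +
      58 * x ^ 5 * y ^ 2 +
      2 * x ^ 5 * y ^ 3 +
      32 * x ^ 6 * y ^ 0 +
      18 * x ^ 6 * y ^ 1 +
      2 * x ^ 6 * y ^ 2 := by
    repeat' apply add_nonneg
    all_goals exact mono_nonneg hx hy _ (by norm_num) _ _
  have hMt : (0:ℝ) < (y+2)^2*(y+3)^2*(y+5)*(2*x+y+8)*(2*x+y+9) := by positivity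
  nlinarith [key, hP, hMt]

/-! ### The weighted series and the transfer identity -/

noncomputable def Sig (k : ℕ) : ℝ := ∑' n : ℕ, Gg (n+2) k * c (n+2) k

noncomputable def f2 (j n : ℕ) : ℝ :=
  W (n+2) (j+1) * (((n:ℝ)+(j:ℝ)+2)/(2*(n:ℝ)+(j:ℝ)+7)) * c (n+2) j

noncomputable def f3 (j n : ℕ) : ℝ :=
  W (n+2) (j+1) * (((n:ℝ)+1)/(2*(n:ℝ)+(j:ℝ)+7)) * c (n+1) (j+1)

noncomputable def f4 (j n : ℕ) : ℝ :=
  W (n+3) (j+1) * (((n:ℝ)+2)/(2*(n:ℝ)+(j:ℝ)+9)) * c (n+2) (j+1)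

lemma c_le_geom'' (n m k k' : ℕ) (h : n ≤ m) (hk : k ≤ k') :
    c m k ≤ (2/3:ℝ)^n * 2^k' := by
  refine le_trans (c_le_geom' n m k h) ?_
  have h1 : (2:ℝ)^k ≤ 2^k' := by
    apply pow_le_pow_right₀ (by norm_num) hk
  have h2 : (0:ℝ) ≤ (2/3:ℝ)^n := by positivity
  exact mul_le_mul_of_nonneg_left h1 h2

lemma Gg_nonneg (n j : ℕ) : 0 ≤ Gg (n+2) (j+1) :=
  le_trans (by positivity) (GI n j)

lemma s_gc (j : ℕ) : Summable (fun n : ℕ => Gg (n+2) (j+1) * c (n+2) (j+1)) := by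
  apply sum_helper (j+1)
  intro n
  have h := bound2 (Gg_nonneg n j) ((Gg_le_W (n+2) (j+1)).trans (W_le n (j+1)))
    (c_nonneg (n+2) (j+1)) (c_le_geom'' n (n+2) (j+1) (j+1) (by omega) le_rfl)
  refine h.trans (le_of_eq ?_)
  ring

lemma s_f2 (j : ℕ) : Summable (fun n : ℕ => f2 j n) := by
  apply sum_helper (j+1)
  intro n
  have hx : (0:ℝ) ≤ (n:ℝ) := Nat.cast_nonneg n
  have hy : (0:ℝ) ≤ (j:ℝ) := Nat.cast_nonneg j
  have hb1 : ((n:ℝ)+(j:ℝ)+2)/(2*(n:ℝ)+(j:ℝ)+7) ≤ 1 := by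
    rw [div_le_one (by positivity)]; linarith
  have h := bound3 (W_nonneg (n+2) (j+1)) (W_le n (j+1)) (by positivity) hb1
    (c_nonneg (n+2) j) (c_le_geom'' n (n+2) j (j+1) (by omega) (by omega))
  refine le_trans (le_of_eq (by unfold f2; rfl)) (h.trans (le_of_eq ?_))
  ring

lemma s_f3 (j : ℕ) : Summable (fun n : ℕ => f3 j n) := by
  apply sum_helper (j+1)
  intro n
  have hx : (0:ℝ) ≤ (n:ℝ) := Nat.cast_nonneg n
  have hy : (0:ℝ) ≤ (j:ℝ) := Nat.cast_nonneg j
  have hb1 : ((n:ℝ)+1)/(2*(n:ℝ)+(j:ℝ)+7) ≤ 1 := by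
    rw [div_le_one (by positivity)]; linarith
  have h := bound3 (W_nonneg (n+2) (j+1)) (W_le n (j+1)) (by positivity) hb1
    (c_nonneg (n+1) (j+1)) (c_le_geom'' n (n+1) (j+1) (j+1) (by omega) le_rfl)
  refine le_trans (le_of_eq (by unfold f3; rfl)) (h.trans (le_of_eq ?_))
  ring

lemma s_f4 (j : ℕ) : Summable (fun n : ℕ => f4 j n) := by
  apply sum_helper (j+1)
  intro n
  have hx : (0:ℝ) ≤ (n:ℝ) := Nat.cast_nonneg n
  have hy : (0:ℝ) ≤ (j:ℝ) := Nat.cast_nonneg j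
  have hb1 : ((n:ℝ)+2)/(2*(n:ℝ)+(j:ℝ)+9) ≤ 1 := by
    rw [div_le_one (by positivity)]; linarith
  have h := bound3 (W_nonneg (n+3) (j+1)) (W_le' n (j+1)) (by positivity) hb1
    (c_nonneg (n+2) (j+1)) (c_le_geom'' n (n+2) (j+1) (j+1) (by omega) le_rfl)
  refine le_trans (le_of_eq (by unfold f4; rfl)) (h.trans (le_of_eq ?_))
  ring

lemma TI (j : ℕ) : Sig (j+1) =
    W 2 (j+1) * c 1 (j+1) * (1/((j:ℝ)+7)) + ∑' n : ℕ, f2 j n := by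
  have hF : ∀ n : ℕ, Gg (n+2) (j+1) * c (n+2) (j+1) = (f2 j n + f3 j n) - f4 j n := by
    intro n
    simp only [Gg, f2, f3, f4]
    rw [c_rec n j]
    push_cast
    ring
  have e0 : Sig (j+1) = ∑' n : ℕ, ((f2 j n + f3 j n) - f4 j n) := by
    unfold Sig; exact tsum_congr hF
  rw [e0, Summable.tsum_sub ((s_f2 j).add (s_f3 j)) (s_f4 j),
      Summable.tsum_add (s_f2 j) (s_f3 j), Summable.tsum_eq_zero_add (s_f3 j)]
  have e34 : ∀ n : ℕ, f3 j (n+1) = f4 j n := by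
    intro n
    simp only [f3, f4]
    push_cast
    ring
  rw [tsum_congr e34]
  have e30 : f3 j 0 = W 2 (j+1) * c 1 (j+1) * (1/((j:ℝ)+7)) := by
    simp only [f3]
    push_cast
    ring
  rw [e30]
  ring

/-! ### The Grönwall-type iteration -/

lemma gron : ∀ j : ℕ, Sig (j+1) ≤ (11 - 16/((j:ℝ)+2))/((j:ℝ)+4) := by
  intro j
  induction j with
  | zero =>
    have h0 : ∀ n : ℕ, f2 0 n = 0 := by
      intro n; simp only [f2]; rw [c_l_zero]; ring
    have ht : ∑' n : ℕ, f2 0 n = 0 := by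
      rw [tsum_congr h0]; exact tsum_zero
    rw [TI 0, ht]
    have hW : W 2 1 = 32 := by unfold W; norm_num
    have hc : c 1 1 = 2/15 := by
      have := c_one_succ 0
      norm_num at this
      rw [this]
    rw [hW, hc]
    norm_num
  | succ j ih =>
    have key : ∀ n : ℕ, f2 (j+1) n ≤
        (((j:ℝ)+4)/((j:ℝ)+5)) * (Gg (n+2) (j+1) * c (n+2) (j+1)) := by
      intro n
      have e : f2 (j+1) n =
          (W (n+2) (j+2) * (((n:ℝ)+(j:ℝ)+3)/(2*(n:ℝ)+(j:ℝ)+8))) * c (n+2) (j+1) := by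
        simp only [f2]
        push_cast
        ring
      calc f2 (j+1) n
          = (W (n+2) (j+2) * (((n:ℝ)+(j:ℝ)+3)/(2*(n:ℝ)+(j:ℝ)+8))) * c (n+2) (j+1) := e
        _ ≤ ((((j:ℝ)+4)/((j:ℝ)+5)) * Gg (n+2) (j+1)) * c (n+2) (j+1) :=
            mul_le_mul_of_nonneg_right (KI n j) (c_nonneg (n+2) (j+1))
        _ = (((j:ℝ)+4)/((j:ℝ)+5)) * (Gg (n+2) (j+1) * c (n+2) (j+1)) := by ring
    have hsum : ∑' n : ℕ, f2 (j+1) n ≤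
        (((j:ℝ)+4)/((j:ℝ)+5)) * Sig (j+1) := by
      have h1 : ∑' n : ℕ, f2 (j+1) n ≤
          ∑' n : ℕ, (((j:ℝ)+4)/((j:ℝ)+5)) * (Gg (n+2) (j+1) * c (n+2) (j+1)) :=
        Summable.tsum_le_tsum key (s_f2 (j+1)) ((s_gc j).mul_left _)
      rw [tsum_mul_left] at h1
      exact h1
    have hB : W 2 (j+2) * c 1 (j+2) * (1/(((j:ℕ):ℝ)+1+7)) =
        (8*((j:ℝ)+5)^2/((j:ℝ)+3)^2) *
          ((2*((j:ℝ)+2)^2+14*((j:ℝ)+2))/(((j:ℝ)+3)*((j:ℝ)+4)*((j:ℝ)+5)*((j:ℝ)+6))) *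
          (1/((j:ℝ)+8)) := by
      have hc : c 1 (j+2) = (2 * ((j : ℝ) + 2) ^ 2 + 14 * ((j : ℝ) + 2)) /
          (((j : ℝ) + 3) * ((j : ℝ) + 4) * ((j : ℝ) + 5) * ((j : ℝ) + 6)) := by
        have := c_one_succ (j+1)
        push_cast at this
        rw [this]
        ring_nf
      have hW : W 2 (j+2) = 8*((j:ℝ)+5)^2/((j:ℝ)+3)^2 := by
        unfold W
        push_cast
        norm_num
        ring
      rw [hc, hW]
      push_cast
      ring
    have hTI := TI (j+1)
    push_cast at hTI
    rw [hTI, hB]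
    set y : ℝ := (j:ℝ) with hydef
    have hy : (0:ℝ) ≤ y := Nat.cast_nonneg j
    have step2 : (((j:ℝ)+4)/((j:ℝ)+5)) * Sig (j+1) ≤
        ((y+4)/(y+5)) * ((11 - 16/(y+2))/(y+4)) :=
      mul_le_mul_of_nonneg_left ih (by positivity)
    have harith : (8*(y+5)^2/(y+3)^2) *
          ((2*(y+2)^2+14*(y+2))/((y+3)*(y+4)*(y+5)*(y+6))) * (1/(y+8))
        + ((y+4)/(y+5)) * ((11 - 16/(y+2))/(y+4))
        ≤ (11 - 16/(y+1+2))/(y+1+4) := by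
      have hd2 : (y+2) ≠ 0 := by positivity
      have hd3 : (y+3) ≠ 0 := by positivity
      have hd4 : (y+4) ≠ 0 := by positivity
      have hd5 : (y+5) ≠ 0 := by positivity
      have hd6 : (y+6) ≠ 0 := by positivity
      have hd8 : (y+8) ≠ 0 := by positivity
      rw [← sub_nonneg]
      have keyq : ((11 - 16/(y+1+2))/(y+1+4)
          - ((8*(y+5)^2/(y+3)^2) *
            ((2*(y+2)^2+14*(y+2))/((y+3)*(y+4)*(y+5)*(y+6))) * (1/(y+8))
          + ((y+4)/(y+5)) * ((11 - 16/(y+2))/(y+4))))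
          * ((y+2)*(y+3)^3*(y+4)*(y+5)*(y+6)*(y+8)) =
          16*y^4 + 416*y^3 + 3472*y^2 + 11648*y + 13248 := by
        field_simp
        ring
      have hP : (0:ℝ) ≤ 16*y^4 + 416*y^3 + 3472*y^2 + 11648*y + 13248 := by positivity
      have hM : (0:ℝ) < (y+2)*(y+3)^3*(y+4)*(y+5)*(y+6)*(y+8) := by positivity
      nlinarith [keyq, hP, hM]
    calc (8*(y+5)^2/(y+3)^2) *
          ((2*(y+2)^2+14*(y+2))/((y+3)*(y+4)*(y+5)*(y+6))) * (1/(y+8))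
          + ∑' n : ℕ, f2 (j+1) n
        ≤ (8*(y+5)^2/(y+3)^2) *
          ((2*(y+2)^2+14*(y+2))/((y+3)*(y+4)*(y+5)*(y+6))) * (1/(y+8))
          + ((y+4)/(y+5)) * ((11 - 16/(y+2))/(y+4)) := by
          have := hsum.trans step2
          linarith
      _ ≤ (11 - 16/(y+1+2))/(y+1+4) := harith
      _ = (11 - 16/(((j+1 : ℕ):ℝ)+2))/(((j+1 : ℕ):ℝ)+4) := by push_cast; ring

/-- `z_k = ∑_{l=2}^∞ l(l+1)·c(l,k)` is a convergent series and satisfies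
`0 ≤ z_k ≤ C/k` for an absolute constant `C > 0` and all `k ≥ 1`. -/
theorem z_bound :
    ∃ C : ℝ, 0 < C ∧ ∀ k : ℕ, 1 ≤ k →
      Summable (fun l : ℕ => ((l : ℝ) + 2) * ((l : ℝ) + 3) * c (l + 2) k) ∧
      0 ≤ ∑' l : ℕ, ((l : ℝ) + 2) * ((l : ℝ) + 3) * c (l + 2) k ∧
      (∑' l : ℕ, ((l : ℝ) + 2) * ((l : ℝ) + 3) * c (l + 2) k) ≤ C / (k : ℝ) := by
  refine ⟨11, by norm_num, fun k hk => ?_⟩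
  obtain ⟨j, rfl⟩ : ∃ j, k = j+1 := ⟨k-1, by omega⟩
  have hs : Summable (fun l : ℕ => ((l : ℝ) + 2) * ((l : ℝ) + 3) * c (l + 2) (j+1)) := by
    apply sum_helper (j+1)
    intro n
    have hx : (0:ℝ) ≤ (n:ℝ) := Nat.cast_nonneg n
    have hy : (0:ℝ) ≤ ((j+1:ℕ):ℝ) := Nat.cast_nonneg (j+1)
    have hA : ((n:ℝ)+2)*((n:ℝ)+3) ≤ 14*(((j+1:ℕ):ℝ)+4)^2*((n:ℝ)+1)^4 := by
      have e2 : ((n:ℝ)+1)^2 ≤ ((n:ℝ)+1)^4 := by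
        have h1 : (1:ℝ) ≤ (n:ℝ)+1 := by linarith
        exact pow_le_pow_right₀ h1 (by norm_num)
      nlinarith [sq_nonneg ((n:ℝ)+1), sq_nonneg (((j+1:ℕ):ℝ)), mul_nonneg hy (pow_nonneg (by positivity : (0:ℝ) ≤ ((n:ℝ)+1)) 4), sq_nonneg (((j+1:ℕ):ℝ)) , pow_nonneg (by positivity : (0:ℝ) ≤ ((n:ℝ)+1)) 4]
    have h := bound2 (by positivity : (0:ℝ) ≤ ((n:ℝ)+2)*((n:ℝ)+3)) hA
      (c_nonneg (n+2) (j+1)) (c_le_geom'' n (n+2) (j+1) (j+1) (by omega) le_rfl)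
    refine le_trans (le_of_eq (by ring_nf)) (h.trans (le_of_eq ?_))
    ring
  refine ⟨hs, tsum_nonneg (fun n => ?_), ?_⟩
  · have := c_nonneg (n+2) (j+1)
    positivity
  · have h1 : ∀ n : ℕ, ((n:ℝ)+2)*((n:ℝ)+3)*c (n+2) (j+1) ≤
        Gg (n+2) (j+1) * c (n+2) (j+1) := fun n =>
      mul_le_mul_of_nonneg_right (GI n j) (c_nonneg (n+2) (j+1))
    have h2 : (∑' l : ℕ, ((l : ℝ) + 2) * ((l : ℝ) + 3) * c (l + 2) (j+1)) ≤ Sig (j+1) :=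
      Summable.tsum_le_tsum h1 hs (s_gc j)
    have h3 := gron j
    have hy : (0:ℝ) ≤ (j:ℝ) := Nat.cast_nonneg j
    have h4 : (11 - 16/((j:ℝ)+2))/((j:ℝ)+4) ≤ 11/(((j+1:ℕ):ℝ)) := by
      have e : ((j+1:ℕ):ℝ) = (j:ℝ)+1 := by push_cast; ring
      rw [e, div_le_div_iff₀ (by positivity) (by positivity)]
      have h5 : (0:ℝ) < 16/((j:ℝ)+2) := by positivity
      nlinarith
    linarith
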